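/- The number of fixed points of any permutation τ equals ∑_π (-1)^{|π|-1} (∑_{x ∈ SSF(π)} C(|π|-1, x-1)) · occ(π, τ), summed over all nonempty permutations π. -/

import Mathlib

open Finset

/-- Number of occurrences of the classical pattern `σ` in `τ`. -/
def occ {k n : ℕ} (σ : Equiv.Perm (Fin k)) (τ : Equiv.Perm (Fin n)) : ℕ :=
  (univ.filter fun f : Fin k → Fin n =>
    (∀ i j : Fin k, i < j → f i < f j) ∧
    (∀ i j : Fin k, σ i < σ j ↔ τ (f i) < τ (f j))).card

/-- The set of positions of skew strong fixed points of `π`: positions `j` such that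
no `i < j` has `π(i) < π(j)` and no `i > j` has `π(i) > π(j)`. -/
def ssfPos {n : ℕ} (π : Equiv.Perm (Fin n)) : Finset (Fin n) :=
  univ.filter fun j : Fin n =>
    (∀ i : Fin n, i < j → π j < π i) ∧ (∀ i : Fin n, j < i → π i < π j)

/- ### Auxiliary material -/

lemma lemW (a : ℕ) : ∀ (Q r : ℕ),
    ∑ b ∈ range (Q+1), (-1:ℤ)^b * (Q.choose b) * ((a+b).choose (b+r))
      = (-1)^Q * (a.choose (Q+r)) := by
  intro Q
  induction Q with
  | zero => intro r; simp
  | succ Q ih =>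
    intro r
    have e1 := ih r
    have e2 : ∑ b ∈ range (Q+1), (-1:ℤ)^b * (Q.choose b) * ((a+b).choose (b+r+1))
        = (-1)^Q * (a.choose (Q+r+1)) := ih (r+1)
    have hT1 : ∑ b ∈ range (Q+2), (-1:ℤ)^b * (Q.choose b) * ((a+b).choose (b+r))
        = (-1)^Q * (a.choose (Q+r)) := by
      rw [sum_range_succ, e1]; simp [Nat.choose_succ_self]
    have hU : ∑ c ∈ range (Q+1), (-1:ℤ)^c * (Q.choose c) * ((a+c+1).choose (c+r+1))
        = (-1)^Q * (a.choose (Q+r)) + (-1)^Q * (a.choose (Q+r+1)) := by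
      rw [← e1, ← e2, ← Finset.sum_add_distrib]
      refine Finset.sum_congr rfl fun c _ => ?_
      have : ((a+c+1).choose (c+r+1) : ℤ) = (a+c).choose (c+r) + (a+c).choose (c+r+1) := by
        exact_mod_cast Nat.choose_succ_succ (a+c) (c+r)
      rw [this]; ring
    have hV : ∑ c ∈ range (Q+1), (-1:ℤ)^c * (Q.choose (c+1)) * ((a+c+1).choose (c+r+1))
        = (a.choose r : ℤ) - (-1)^Q * (a.choose (Q+r)) := by
      have h := Finset.sum_range_succ'
        (fun b => (-1:ℤ)^b * (Q.choose b) * ((a+b).choose (b+r))) (Q+1)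
      rw [hT1] at h
      have h2 : ∑ c ∈ range (Q+1),
          ((-1:ℤ)^(c+1) * (Q.choose (c+1)) * ((a+(c+1)).choose (c+1+r)))
          = - ∑ c ∈ range (Q+1), (-1:ℤ)^c * (Q.choose (c+1)) * ((a+c+1).choose (c+r+1)) := by
        rw [← Finset.sum_neg_distrib]
        refine Finset.sum_congr rfl fun c _ => ?_
        rw [show c+1+r = c+r+1 by omega, show a+(c+1) = a+c+1 by ring, pow_succ]
        ring
      rw [h2] at h
      simp only [pow_zero, one_mul, Nat.choose_zero_right, Nat.cast_one, add_zero, zero_add] at h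
      linarith
    -- main computation
    have hsplit := Finset.sum_range_succ'
      (fun b => (-1:ℤ)^b * ((Q+1).choose b) * ((a+b).choose (b+r))) (Q+2-1)
    rw [show Q+2-1 = Q+1 from rfl] at hsplit
    rw [hsplit]
    have h3 : ∑ c ∈ range (Q+1),
        ((-1:ℤ)^(c+1) * ((Q+1).choose (c+1)) * ((a+(c+1)).choose (c+1+r)))
        = - (∑ c ∈ range (Q+1), (-1:ℤ)^c * (Q.choose c) * ((a+c+1).choose (c+r+1))
           + ∑ c ∈ range (Q+1), (-1:ℤ)^c * (Q.choose (c+1)) * ((a+c+1).choose (c+r+1))) := by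
      rw [← Finset.sum_add_distrib, ← Finset.sum_neg_distrib]
      refine Finset.sum_congr rfl fun c _ => ?_
      have : (((Q+1)).choose (c+1) : ℤ) = Q.choose c + Q.choose (c+1) := by
        exact_mod_cast Nat.choose_succ_succ Q c
      rw [show c+1+r = c+r+1 by omega, show a+(c+1) = a+c+1 by ring, this, pow_succ]
      ring
    rw [h3, hU, hV]
    simp only [pow_zero, one_mul, Nat.choose_zero_right, Nat.cast_one, add_zero, zero_add]
    rw [show Q+1+r = Q+r+1 by omega, pow_succ]
    ring

lemma lemA2 (P Q : ℕ) :
    ∑ a ∈ range (P+1), (-1:ℤ)^a * (P.choose a) * (a.choose Q)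
      = (-1)^Q * (if P = Q then 1 else 0) := by
  rcases lt_or_ge P Q with h | h
  · rw [if_neg (by omega)]
    rw [Finset.sum_eq_zero, mul_zero]
    intro a ha
    have ha' : a < Q := by simp at ha; omega
    rw [show a.choose Q = 0 from Nat.choose_eq_zero_of_lt ha']
    ring
  · -- P ≥ Q : terms with a < Q vanish
    have key : ∀ a ∈ range (P+1), (-1:ℤ)^a * (P.choose a) * (a.choose Q)
        = (-1:ℤ)^a * ((P.choose Q) * ((P-Q).choose (a-Q)) * (if Q ≤ a then 1 else 0)) := by
      intro a ha
      by_cases hQ : Q ≤ a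
      · rw [if_pos hQ, mul_one]
        have hn := Nat.choose_mul (n := P) hQ
        have hz : (P.choose a : ℤ) * (a.choose Q) = (P.choose Q) * ((P-Q).choose (a-Q)) := by
          exact_mod_cast hn
        rw [mul_assoc, hz]
      · rw [if_neg hQ, show a.choose Q = 0 from Nat.choose_eq_zero_of_lt (by omega)]; ring
    rw [Finset.sum_congr rfl key]
    have hrw : ∑ a ∈ range (P+1), (-1:ℤ)^a * ((P.choose Q) * ((P-Q).choose (a-Q)) * (if Q ≤ a then 1 else 0))
        = (P.choose Q) * ∑ c ∈ range (P-Q+1), (-1:ℤ)^(c+Q) * ((P-Q).choose c) := by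
      rw [Finset.mul_sum]
      rw [show P+1 = Q + (P-Q+1) by omega]
      rw [Finset.sum_range_add]
      have hz : ∑ a ∈ range Q, (-1:ℤ)^a * ((P.choose Q) * ((P-Q).choose (a-Q)) * (if Q ≤ a then 1 else 0)) = 0 := by
        apply Finset.sum_eq_zero
        intro a ha
        simp at ha
        rw [if_neg (by omega)]; ring
      rw [hz, zero_add]
      refine Finset.sum_congr rfl fun c _ => ?_
      rw [if_pos (by omega), show Q + c - Q = c by omega, show (-1:ℤ)^(Q+c) = (-1)^(c+Q) by ring_nf]
      ring
    rw [hrw]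
    have : ∑ c ∈ range (P-Q+1), (-1:ℤ)^(c+Q) * ((P-Q).choose c)
        = (-1)^Q * ∑ c ∈ range (P-Q+1), (-1:ℤ)^c * ((P-Q).choose c) := by
      rw [Finset.mul_sum]; refine Finset.sum_congr rfl fun c _ => ?_; rw [pow_add]; ring
    rw [this, Int.alternating_sum_range_choose]
    by_cases hPQ : P = Q
    · simp [hPQ, Nat.sub_self]
    · rw [if_neg (by omega), if_neg hPQ]; ring

lemma lemA (P Q : ℕ) :
    ∑ a ∈ range (P+1), ∑ b ∈ range (Q+1),
        (-1:ℤ)^(a+b) * (P.choose a) * (Q.choose b) * ((a+b).choose b)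
      = (if P = Q then 1 else 0) := by
  have inner : ∀ a, ∑ b ∈ range (Q+1), (-1:ℤ)^(a+b) * (P.choose a) * (Q.choose b) * ((a+b).choose b)
      = (-1)^a * (P.choose a) * ((-1)^Q * (a.choose Q)) := by
    intro a
    have := lemW a Q 0
    simp only [add_zero] at this
    rw [← this, Finset.mul_sum]
    refine Finset.sum_congr rfl fun b _ => ?_
    rw [pow_add]; ring
  rw [Finset.sum_congr rfl fun a _ => inner a]
  have : ∑ a ∈ range (P+1), (-1:ℤ)^a * (P.choose a) * ((-1)^Q * (a.choose Q))
      = (-1)^Q * ∑ a ∈ range (P+1), (-1:ℤ)^a * (P.choose a) * (a.choose Q) := by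
    rw [Finset.mul_sum]; refine Finset.sum_congr rfl fun a _ => ?_; ring
  rw [this, lemA2]
  rw [← mul_assoc, ← pow_add, ← two_mul, pow_mul]
  norm_num

variable {n : ℕ} (τ : Equiv.Perm (Fin n))

/-- Auxiliary: the monotone-occurrence filter set. -/
def SMset (n m : ℕ) : Finset (Fin (m+1) → Fin n) :=
  univ.filter fun f => ∀ i j : Fin (m+1), i < j → f i < f j

def Jset {m : ℕ} (f : Fin (m+1) → Fin n) : Finset (Fin (m+1)) :=
  univ.filter fun j =>
    (∀ i, i < j → τ (f j) < τ (f i)) ∧ (∀ i, j < i → τ (f i) < τ (f j))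

def Compat {m : ℕ} (π : Equiv.Perm (Fin (m+1))) (f : Fin (m+1) → Fin n) : Prop :=
  ∀ i j, π i < π j ↔ τ (f i) < τ (f j)

lemma card_filter_lt_fin {k : ℕ} (c : Fin k) :
    (univ.filter fun v => v < c).card = (c : ℕ) := by
  have : (univ.filter fun v => v < c) = Finset.Iio c := by ext v; simp
  rw [this, Fin.card_Iio]

lemma card_filter_gt_fin {k : ℕ} (c : Fin (k+1)) :
    (univ.filter fun v => c < v).card = k - (c : ℕ) := by
  have : (univ.filter fun v => c < v) = Finset.Ioi c := by ext v; simp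
  rw [this, Fin.card_Ioi]; omega

lemma card_filter_comp_inj {k l : ℕ} (g : Fin k → Fin l) (hg : Function.Injective g)
    (hsur : Function.Surjective g) (p : Fin l → Prop) [DecidablePred p] :
    (univ.filter fun i => p (g i)).card = (univ.filter p).card := by
  apply Finset.card_bij (fun i _ => g i)
  · intro a ha; simp only [mem_filter, mem_univ, true_and] at ha ⊢; exact ha
  · intro a ha b hb hab; exact hg hab
  · intro b hb
    obtain ⟨a, rfl⟩ := hsur b
    simp only [mem_filter, mem_univ, true_and] at hb
    exact ⟨a, by simp [hb], rfl⟩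

/-- uniqueness of compatible pattern -/
lemma compat_unique {m : ℕ} {π π' : Equiv.Perm (Fin (m+1))} {f : Fin (m+1) → Fin n}
    (h : Compat τ π f) (h' : Compat τ π' f) : π = π' := by
  have key : ∀ i j, π i < π j ↔ π' i < π' j := fun i j => (h i j).trans (h' i j).symm
  set q : Equiv.Perm (Fin (m+1)) := π.symm.trans π' with hq
  have hmono : StrictMono q := by
    intro x y hxy
    have : π (π.symm x) < π (π.symm y) := by simpa using hxy
    simpa [hq] using (key _ _).mp this
  have : q = Equiv.refl _ := by
    have := Subsingleton.elim (hmono.orderIsoOfSurjective q q.surjective)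
      (OrderIso.refl (Fin (m+1)))
    have h2 : ∀ x, q x = x := by
      intro x
      have := congrArg (fun (e : Fin (m+1) ≃o Fin (m+1)) => e x) this
      simpa using this
    exact Equiv.ext h2
  have h3 : ∀ i, π' i = π i := by
    intro i
    have := congrArg (fun (e : Equiv.Perm (Fin (m+1))) => e (π i)) this
    simpa [hq] using this
  exact Equiv.ext (fun i => (h3 i).symm)

/-- existence: standardization -/
lemma compat_exists {m : ℕ} {f : Fin (m+1) → Fin n} (hf : Function.Injective (τ ∘ f)) :
    ∃ π : Equiv.Perm (Fin (m+1)), Compat τ π f := by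
  set g : Fin (m+1) → Fin n := τ ∘ f with hg
  have hbound : ∀ i, (univ.filter fun i' => g i' < g i).card < m + 1 := by
    intro i
    have hsub : (univ.filter fun i' => g i' < g i) ⊆ univ.erase i := by
      intro x hx
      simp only [mem_filter, mem_univ, true_and] at hx
      refine mem_erase.2 ⟨fun hxi => ?_, mem_univ x⟩
      exact absurd hx (by rw [hxi]; exact lt_irrefl _)
    calc (univ.filter fun i' => g i' < g i).card ≤ (univ.erase i).card :=
          card_le_card hsub
      _ = m := by rw [card_erase_of_mem (mem_univ i)]; simp
      _ < m + 1 := Nat.lt_succ_self m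
  set p : Fin (m+1) → Fin (m+1) := fun i => ⟨_, hbound i⟩ with hp
  have hmono : ∀ i j, g i < g j → p i < p j := by
    intro i j hij
    have hsub : (univ.filter fun i' => g i' < g i) ⊂ (univ.filter fun i' => g i' < g j) := by
      constructor
      · intro x hx; simp only [mem_filter, mem_univ, true_and] at hx ⊢
        exact hx.trans hij
      · intro hcon
        have : i ∈ (univ.filter fun i' => g i' < g j) := by simp [hij]
        have := hcon this
        simp at this
    exact Finset.card_lt_card hsub
  have hinj : Function.Injective p := by
    intro i j hij
    by_contra hne
    rcases lt_trichotomy (g i) (g j) with h | h | h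
    · exact absurd hij (ne_of_lt (hmono _ _ h))
    · exact hne (hf h)
    · exact absurd hij.symm (ne_of_lt (hmono _ _ h))
  have hbij : Function.Bijective p := Finite.injective_iff_bijective.mp hinj
  refine ⟨Equiv.ofBijective p hbij, ?_⟩
  intro i j
  show p i < p j ↔ g i < g j
  constructor
  · intro hpij
    rcases lt_trichotomy (g i) (g j) with h | h | h
    · exact h
    · exact absurd hpij (by rw [hf h]; exact lt_irrefl _)
    · exact absurd (hmono _ _ h) (asymm hpij)
  · exact hmono i j

lemma compat_ssf {m : ℕ} {π : Equiv.Perm (Fin (m+1))} {f : Fin (m+1) → Fin n}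
    (h : Compat τ π f) : ssfPos π = Jset τ f := by
  ext j
  simp only [ssfPos, Jset, mem_filter, mem_univ, true_and]
  constructor
  · rintro ⟨h1, h2⟩
    exact ⟨fun i hi => (h j i).mp (h1 i hi), fun i hi => (h i j).mp (h2 i hi)⟩
  · rintro ⟨h1, h2⟩
    exact ⟨fun i hi => (h j i).mpr (h1 i hi), fun i hi => (h i j).mpr (h2 i hi)⟩

lemma compat_val {m : ℕ} {π : Equiv.Perm (Fin (m+1))} {f : Fin (m+1) → Fin n}
    (h : Compat τ π f) {j : Fin (m+1)} (hj : j ∈ Jset τ f) : (π j : ℕ) = m - (j : ℕ) := by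
  simp only [Jset, mem_filter, mem_univ, true_and] at hj
  have key : (univ.filter fun i => π i < π j) = (univ.filter fun i => j < i) := by
    ext i
    simp only [mem_filter, mem_univ, true_and]
    constructor
    · intro hi
      rcases lt_trichotomy j i with h' | h' | h'
      · exact h'
      · subst h'; exact absurd hi (lt_irrefl _)
      · exact absurd hi (asymm ((h j i).mpr (hj.1 i h')))
    · intro hi; exact (h i j).mpr (hj.2 i hi)
  have h1 := card_filter_comp_inj (fun i => π i) π.injective π.surjective
    (fun v => v < π j)
  rw [card_filter_lt_fin, key, card_filter_gt_fin] at h1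
  omega
lemma stepA (m : ℕ) :
    (∑ π : Equiv.Perm (Fin (m+1)),
        (-1:ℤ)^m * (∑ j ∈ ssfPos π, (m.choose (π j : ℕ) : ℤ)) * (occ π τ : ℤ))
    = ∑ f ∈ SMset n m, ∑ j ∈ Jset τ f, (-1:ℤ)^m * (m.choose (m - (j:ℕ)) : ℤ) := by
  have step1 : ∀ π : Equiv.Perm (Fin (m+1)),
      (-1:ℤ)^m * (∑ j ∈ ssfPos π, (m.choose (π j : ℕ) : ℤ)) * (occ π τ : ℤ)
      = ∑ f : Fin (m+1) → Fin n,
          if (∀ i j : Fin (m+1), i < j → f i < f j) ∧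
             (∀ i j : Fin (m+1), π i < π j ↔ τ (f i) < τ (f j))
          then (-1:ℤ)^m * (∑ j ∈ ssfPos π, (m.choose (π j : ℕ) : ℤ)) else 0 := by
    intro π
    rw [occ, ← Finset.sum_filter, Finset.sum_const, nsmul_eq_mul]
    push_cast
    ring
  rw [Finset.sum_congr rfl fun π _ => step1 π, Finset.sum_comm]
  have step2 : ∀ f : Fin (m+1) → Fin n,
      (∑ π : Equiv.Perm (Fin (m+1)),
        if (∀ i j : Fin (m+1), i < j → f i < f j) ∧
           (∀ i j : Fin (m+1), π i < π j ↔ τ (f i) < τ (f j))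
        then (-1:ℤ)^m * (∑ j ∈ ssfPos π, (m.choose (π j : ℕ) : ℤ)) else 0)
      = if (∀ i j : Fin (m+1), i < j → f i < f j)
        then ∑ j ∈ Jset τ f, (-1:ℤ)^m * (m.choose (m - (j:ℕ)) : ℤ) else 0 := by
    intro f
    by_cases hf : ∀ i j : Fin (m+1), i < j → f i < f j
    · rw [if_pos hf]
      have hsm : StrictMono f := fun i j h => hf i j h
      have hinj : Function.Injective (τ ∘ f) := τ.injective.comp hsm.injective
      obtain ⟨π₀, hπ₀⟩ := compat_exists τ hinj
      rw [Finset.sum_eq_single π₀]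
      · rw [if_pos ⟨hf, hπ₀⟩, compat_ssf τ hπ₀, Finset.mul_sum]
        refine Finset.sum_congr rfl fun j hj => ?_
        rw [compat_val τ hπ₀ hj]
      · intro π _ hne
        rw [if_neg]
        rintro ⟨-, hc⟩
        exact hne (compat_unique τ hc hπ₀)
      · intro h; exact absurd (mem_univ π₀) h
    · rw [if_neg hf]
      apply Finset.sum_eq_zero
      intro π _
      rw [if_neg (fun h => hf h.1)]
  rw [Finset.sum_congr rfl fun f _ => step2 f]
  rw [SMset, ← Finset.sum_filter]
def Pset (s : Fin n) : Finset (Fin n) := univ.filter fun i => i < s ∧ τ s < τ i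
def Qset (s : Fin n) : Finset (Fin n) := univ.filter fun i => s < i ∧ τ i < τ s

lemma fix_iff (s : Fin n) : τ s = s ↔ (Pset τ s).card = (Qset τ s).card := by
  have hL : (s : ℕ) = (univ.filter fun i => i < s ∧ τ i < τ s).card + (Pset τ s).card := by
    have hunion : (univ.filter fun i : Fin n => i < s)
        = (univ.filter fun i => i < s ∧ τ i < τ s) ∪ (univ.filter fun i => i < s ∧ τ s < τ i) := by
      rw [← filter_or]
      refine filter_congr fun i _ => ?_
      constructor
      · intro h
        rcases lt_trichotomy (τ i) (τ s) with h' | h' | h'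
        · exact Or.inl ⟨h, h'⟩
        · exact absurd (τ.injective h') (ne_of_lt h)
        · exact Or.inr ⟨h, h'⟩
      · rintro (⟨h, -⟩ | ⟨h, -⟩) <;> exact h
    have hdisj : Disjoint (univ.filter fun i => i < s ∧ τ i < τ s)
        (univ.filter fun i => i < s ∧ τ s < τ i) := by
      rw [Finset.disjoint_left]
      intro i hi hi'
      simp only [mem_filter, mem_univ, true_and] at hi hi'
      exact lt_asymm hi.2 hi'.2
    have hcard := Finset.card_union_of_disjoint hdisj
    rw [← hunion, card_filter_lt_fin] at hcard
    rw [hcard, Pset]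
  have hR : ((τ s : ℕ)) = (univ.filter fun i => i < s ∧ τ i < τ s).card + (Qset τ s).card := by
    have hunion : (univ.filter fun i : Fin n => τ i < τ s)
        = (univ.filter fun i => i < s ∧ τ i < τ s) ∪ (univ.filter fun i => s < i ∧ τ i < τ s) := by
      rw [← filter_or]
      refine filter_congr fun i _ => ?_
      constructor
      · intro h
        rcases lt_trichotomy i s with h' | h' | h'
        · exact Or.inl ⟨h', h⟩
        · exact absurd (congrArg τ h') (ne_of_lt h)
        · exact Or.inr ⟨h', h⟩
      · rintro (⟨-, h⟩ | ⟨-, h⟩) <;> exact h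
    have hdisj : Disjoint (univ.filter fun i => i < s ∧ τ i < τ s)
        (univ.filter fun i => s < i ∧ τ i < τ s) := by
      rw [Finset.disjoint_left]
      intro i hi hi'
      simp only [mem_filter, mem_univ, true_and] at hi hi'
      exact lt_asymm hi.1 hi'.1
    have hcard := Finset.card_union_of_disjoint hdisj
    rw [← hunion] at hcard
    have h2 := card_filter_comp_inj (fun i => τ i) τ.injective τ.surjective (fun v => v < τ s)
    rw [card_filter_lt_fin] at h2
    rw [h2] at hcard
    rw [hcard, Qset]
  constructor
  · intro h
    have : (τ s : ℕ) = (s : ℕ) := by rw [h]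
    omega
  · intro h
    have : (τ s : ℕ) = (s : ℕ) := by omega
    exact Fin.ext this
def cond' (S : Finset (Fin n)) (s : Fin n) : Prop :=
  ∀ t ∈ S, (t < s → τ s < τ t) ∧ (s < t → τ t < τ s)

instance (S : Finset (Fin n)) (s : Fin n) : Decidable (cond' τ S s) := by
  unfold cond'; infer_instance

lemma image_mem_powersetCard {m : ℕ} {f : Fin (m+1) → Fin n} (hsm : StrictMono f) :
    image f univ ∈ powersetCard (m+1) (univ : Finset (Fin n)) := by
  rw [mem_powersetCard]
  refine ⟨subset_univ _, ?_⟩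
  rw [Finset.card_image_of_injective _ hsm.injective, card_univ, Fintype.card_fin]

lemma filter_gt_image {m : ℕ} {f : Fin (m+1) → Fin n} (hsm : StrictMono f) (j : Fin (m+1)) :
    ((image f univ).filter fun t => f j < t).card = m - (j : ℕ) := by
  have h1 : ((image f univ).filter fun t => f j < t) = image f (univ.filter fun i => j < i) := by
    ext t
    simp only [mem_filter, mem_image, mem_univ, true_and]
    constructor
    · rintro ⟨⟨i, rfl⟩, hlt⟩
      exact ⟨i, hsm.lt_iff_lt.mp hlt, rfl⟩
    · rintro ⟨i, hlt, rfl⟩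
      exact ⟨⟨i, rfl⟩, hsm hlt⟩
  rw [h1, Finset.card_image_of_injective _ hsm.injective, card_filter_gt_fin]

lemma stepB (m : ℕ) :
    (∑ f ∈ SMset n m, ∑ j ∈ Jset τ f, (-1:ℤ)^m * (m.choose (m - (j:ℕ)) : ℤ))
    = ∑ S ∈ powersetCard (m+1) (univ : Finset (Fin n)),
        ∑ s ∈ S.filter (cond' τ S), (-1:ℤ)^m * (m.choose ((S.filter fun t => s < t).card) : ℤ) := by
  refine Finset.sum_bij' (fun f _ => image f univ)
    (fun S hS => fun i => S.orderEmbOfFin (by rw [(mem_powersetCard.mp hS).2]) i)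
    ?_ ?_ ?_ ?_ ?_
  · -- hi : image ∈ powersetCard
    intro f hf
    have hsm : StrictMono f := fun i j h => (mem_filter.mp hf).2 i j h
    exact image_mem_powersetCard hsm
  · -- hj : orderEmbOfFin ∈ SMset
    intro S hS
    rw [SMset, mem_filter]
    exact ⟨mem_univ _, fun i j hij => (S.orderEmbOfFin _).strictMono hij⟩
  · -- left_inv : orderEmbOfFin (image f univ) = f
    intro f hf
    have hsm : StrictMono f := fun i j h => (mem_filter.mp hf).2 i j h
    funext i
    exact congrFun (Finset.orderEmbOfFin_unique _ (fun i => mem_image_of_mem f (mem_univ i)) hsm).symm i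
  · -- right_inv : image (orderEmbOfFin S) univ = S
    intro S hS
    apply Finset.eq_of_subset_of_card_le
    · intro t ht
      obtain ⟨i, -, rfl⟩ := mem_image.mp ht
      exact Finset.orderEmbOfFin_mem S _ i
    · rw [Finset.card_image_of_injective _ (S.orderEmbOfFin _).injective, card_univ,
        Fintype.card_fin, (mem_powersetCard.mp hS).2]
  · -- weights
    intro f hf
    have hsm : StrictMono f := fun i j h => (mem_filter.mp hf).2 i j h
    refine Finset.sum_bij (fun j _ => f j) ?_ ?_ ?_ ?_
    · intro j hj
      rw [Jset, mem_filter] at hj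
      rw [mem_filter]
      refine ⟨mem_image_of_mem f (mem_univ j), fun t ht => ?_⟩
      obtain ⟨i, -, rfl⟩ := mem_image.mp ht
      exact ⟨fun hlt => hj.2.1 i (hsm.lt_iff_lt.mp hlt),
             fun hlt => hj.2.2 i (hsm.lt_iff_lt.mp hlt)⟩
    · intro a ha b hb hab
      exact hsm.injective hab
    · intro s hs
      rw [mem_filter] at hs
      obtain ⟨j, -, rfl⟩ := mem_image.mp hs.1
      refine ⟨j, ?_, rfl⟩
      rw [Jset, mem_filter]
      refine ⟨mem_univ _, fun i hij => (hs.2 (f i) (mem_image_of_mem f (mem_univ i))).1 (hsm hij),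
              fun i hij => (hs.2 (f i) (mem_image_of_mem f (mem_univ i))).2 (hsm hij)⟩
    · intro j hj
      rw [filter_gt_image hsm j]
noncomputable def G (S : Finset (Fin n)) : ℤ :=
  ∑ s ∈ S.filter (cond' τ S),
    (-1:ℤ)^(S.card - 1) * ((S.card - 1).choose ((S.filter fun t => s < t).card) : ℤ)

lemma regroup :
    (∑ m ∈ range n, ∑ S ∈ powersetCard (m+1) (univ : Finset (Fin n)),
      ∑ s ∈ S.filter (cond' τ S), (-1:ℤ)^m * (m.choose ((S.filter fun t => s < t).card) : ℤ))
    = ∑ S ∈ (univ : Finset (Fin n)).powerset, G τ S := by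
  have step1 : ∀ m, ∀ S ∈ powersetCard (m+1) (univ : Finset (Fin n)),
      (∑ s ∈ S.filter (cond' τ S), (-1:ℤ)^m * (m.choose ((S.filter fun t => s < t).card) : ℤ))
      = G τ S := by
    intro m S hS
    have hc : S.card = m + 1 := (mem_powersetCard.mp hS).2
    unfold G
    rw [hc]
    simp only [Nat.add_sub_cancel]
  rw [Finset.sum_congr rfl fun m _ => Finset.sum_congr rfl (step1 m)]
  have hdis := Finset.powerset_card_disjiUnion (univ : Finset (Fin n))
  rw [Finset.sum_powerset, card_univ, Fintype.card_fin]
  rw [Finset.sum_range_succ' (fun k => ∑ S ∈ powersetCard k (univ : Finset (Fin n)), G τ S) n]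
  have h0 : ∑ S ∈ powersetCard 0 (univ : Finset (Fin n)), G τ S = 0 := by
    rw [Finset.powersetCard_zero, Finset.sum_singleton]
    unfold G
    rw [Finset.filter_empty, Finset.sum_empty]
  rw [h0, add_zero]

lemma swapstep :
    (∑ S ∈ (univ : Finset (Fin n)).powerset, G τ S)
    = ∑ s : Fin n, ∑ S ∈ (univ : Finset (Fin n)).powerset.filter
        (fun S => s ∈ S ∧ cond' τ S s),
        (-1:ℤ)^(S.card - 1) * ((S.card - 1).choose ((S.filter fun t => s < t).card) : ℤ) := by
  have step1 : ∀ S : Finset (Fin n), G τ S = ∑ s : Fin n,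
      if s ∈ S ∧ cond' τ S s then
        (-1:ℤ)^(S.card - 1) * ((S.card - 1).choose ((S.filter fun t => s < t).card) : ℤ)
      else 0 := by
    intro S
    unfold G
    rw [← Finset.sum_filter]
    apply Finset.sum_congr
    · ext s; simp [mem_filter, and_comm]
    · intros; rfl
  rw [Finset.sum_congr rfl fun S _ => step1 S, Finset.sum_comm]
  exact Finset.sum_congr rfl fun s _ => (Finset.sum_filter _ _).symm

lemma perpoint (s : Fin n) :
    (∑ S ∈ (univ : Finset (Fin n)).powerset.filter (fun S => s ∈ S ∧ cond' τ S s),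
        (-1:ℤ)^(S.card - 1) * ((S.card - 1).choose ((S.filter fun t => s < t).card) : ℤ))
    = ∑ AB ∈ (Pset τ s).powerset ×ˢ (Qset τ s).powerset,
        (-1:ℤ)^(AB.1.card + AB.2.card) * ((AB.1.card + AB.2.card).choose AB.2.card : ℤ) := by
  have hPmem : ∀ {t}, t ∈ Pset τ s → t < s ∧ τ s < τ t := by
    intro t ht; simpa [Pset] using ht
  have hQmem : ∀ {t}, t ∈ Qset τ s → s < t ∧ τ t < τ s := by
    intro t ht; simpa [Qset] using ht
  refine Finset.sum_bij' (fun S _ => (S ∩ Pset τ s, S ∩ Qset τ s))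
    (fun AB _ => insert s (AB.1 ∪ AB.2)) ?_ ?_ ?_ ?_ ?_
  · intro S hS
    rw [Finset.mem_product]
    exact ⟨Finset.mem_powerset.mpr inter_subset_right, Finset.mem_powerset.mpr inter_subset_right⟩
  · intro AB hAB
    rw [Finset.mem_product, Finset.mem_powerset, Finset.mem_powerset] at hAB
    rw [mem_filter]
    refine ⟨Finset.mem_powerset.mpr (subset_univ _), Finset.mem_insert_self _ _, ?_⟩
    intro t ht
    rcases Finset.mem_insert.mp ht with rfl | ht'
    · exact ⟨fun h => absurd h (lt_irrefl _), fun h => absurd h (lt_irrefl _)⟩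
    rcases Finset.mem_union.mp ht' with hA | hB
    · have := hPmem (hAB.1 hA)
      exact ⟨fun _ => this.2, fun h => absurd this.1 (asymm h)⟩
    · have := hQmem (hAB.2 hB)
      exact ⟨fun h => absurd this.1 (asymm h), fun _ => this.2⟩
  · -- left_inv : insert s ((S∩P) ∪ (S∩Q)) = S
    intro S hS
    rw [mem_filter] at hS
    obtain ⟨-, hsS, hcond⟩ := hS
    apply Finset.Subset.antisymm
    · intro t ht
      rcases Finset.mem_insert.mp ht with rfl | ht'
      · exact hsS
      · rcases Finset.mem_union.mp ht' with h | h
        · exact (Finset.mem_inter.mp h).1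
        · exact (Finset.mem_inter.mp h).1
    · intro t ht
      rcases lt_trichotomy t s with h | rfl | h
      · refine Finset.mem_insert.mpr (Or.inr (Finset.mem_union_left _ ?_))
        refine Finset.mem_inter.mpr ⟨ht, ?_⟩
        rw [Pset, mem_filter]
        exact ⟨mem_univ _, h, (hcond t ht).1 h⟩
      · exact Finset.mem_insert_self _ _
      · refine Finset.mem_insert.mpr (Or.inr (Finset.mem_union_right _ ?_))
        refine Finset.mem_inter.mpr ⟨ht, ?_⟩
        rw [Qset, mem_filter]
        exact ⟨mem_univ _, h, (hcond t ht).2 h⟩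
  · -- right_inv : (insert s (A∪B) ∩ P, insert s (A∪B) ∩ Q) = (A, B)
    intro AB hAB
    rw [Finset.mem_product, Finset.mem_powerset, Finset.mem_powerset] at hAB
    have hA : insert s (AB.1 ∪ AB.2) ∩ Pset τ s = AB.1 := by
      apply Finset.Subset.antisymm
      · intro t ht
        obtain ⟨ht1, ht2⟩ := Finset.mem_inter.mp ht
        have htP := hPmem ht2
        rcases Finset.mem_insert.mp ht1 with rfl | ht'
        · exact absurd htP.1 (lt_irrefl _)
        rcases Finset.mem_union.mp ht' with h | h
        · exact h
        · exact absurd htP.1 (asymm (hQmem (hAB.2 h)).1)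
      · intro t ht
        exact Finset.mem_inter.mpr
          ⟨Finset.mem_insert.mpr (Or.inr (Finset.mem_union_left _ ht)), hAB.1 ht⟩
    have hB : insert s (AB.1 ∪ AB.2) ∩ Qset τ s = AB.2 := by
      apply Finset.Subset.antisymm
      · intro t ht
        obtain ⟨ht1, ht2⟩ := Finset.mem_inter.mp ht
        have htQ := hQmem ht2
        rcases Finset.mem_insert.mp ht1 with rfl | ht'
        · exact absurd htQ.1 (lt_irrefl _)
        rcases Finset.mem_union.mp ht' with h | h
        · exact absurd htQ.1 (asymm (hPmem (hAB.1 h)).1)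
        · exact h
      · intro t ht
        exact Finset.mem_inter.mpr
          ⟨Finset.mem_insert.mpr (Or.inr (Finset.mem_union_right _ ht)), hAB.2 ht⟩
    exact Prod.ext hA hB
  · -- weights
    intro S hS
    rw [mem_filter] at hS
    obtain ⟨-, hsS, hcond⟩ := hS
    have hSeq : S = insert s ((S ∩ Pset τ s) ∪ (S ∩ Qset τ s)) := by
      apply Finset.Subset.antisymm
      · intro t ht
        rcases lt_trichotomy t s with h | rfl | h
        · refine Finset.mem_insert.mpr (Or.inr (Finset.mem_union_left _ ?_))
          refine Finset.mem_inter.mpr ⟨ht, ?_⟩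
          rw [Pset, mem_filter]
          exact ⟨mem_univ _, h, (hcond t ht).1 h⟩
        · exact Finset.mem_insert_self _ _
        · refine Finset.mem_insert.mpr (Or.inr (Finset.mem_union_right _ ?_))
          refine Finset.mem_inter.mpr ⟨ht, ?_⟩
          rw [Qset, mem_filter]
          exact ⟨mem_univ _, h, (hcond t ht).2 h⟩
      · intro t ht
        rcases Finset.mem_insert.mp ht with rfl | ht'
        · exact hsS
        · rcases Finset.mem_union.mp ht' with h | h
          · exact (Finset.mem_inter.mp h).1
          · exact (Finset.mem_inter.mp h).1
    have hdisjPQ : Disjoint (S ∩ Pset τ s) (S ∩ Qset τ s) := by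
      rw [Finset.disjoint_left]
      intro t ht ht'
      exact lt_asymm (hPmem (Finset.mem_inter.mp ht).2).1 (hQmem (Finset.mem_inter.mp ht').2).1
    have hsnot : s ∉ (S ∩ Pset τ s) ∪ (S ∩ Qset τ s) := by
      intro h
      rcases Finset.mem_union.mp h with h | h
      · exact absurd (hPmem (Finset.mem_inter.mp h).2).1 (lt_irrefl _)
      · exact absurd (hQmem (Finset.mem_inter.mp h).2).1 (lt_irrefl _)
    have hcard : S.card = (S ∩ Pset τ s).card + (S ∩ Qset τ s).card + 1 := by
      conv_lhs => rw [hSeq]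
      rw [Finset.card_insert_of_notMem hsnot, Finset.card_union_of_disjoint hdisjPQ]
    have hfil : S.filter (fun t => s < t) = S ∩ Qset τ s := by
      ext t
      simp only [mem_filter, Finset.mem_inter]
      constructor
      · rintro ⟨ht, hlt⟩
        refine ⟨ht, ?_⟩
        rw [Qset, mem_filter]
        exact ⟨mem_univ _, hlt, (hcond t ht).2 hlt⟩
      · rintro ⟨ht, htQ⟩
        exact ⟨ht, (hQmem htQ).1⟩
    rw [hfil, hcard]
    simp only [Nat.add_sub_cancel]
lemma pereval (s : Fin n) :
    (∑ AB ∈ (Pset τ s).powerset ×ˢ (Qset τ s).powerset,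
        (-1:ℤ)^(AB.1.card + AB.2.card) * ((AB.1.card + AB.2.card).choose AB.2.card : ℤ))
    = if τ s = s then 1 else 0 := by
  rw [Finset.sum_product]
  have inner : ∀ A : Finset (Fin n),
      (∑ B ∈ (Qset τ s).powerset,
        (-1:ℤ)^(A.card + B.card) * ((A.card + B.card).choose B.card : ℤ))
      = ∑ b ∈ range ((Qset τ s).card + 1),
          ((Qset τ s).card.choose b) • ((-1:ℤ)^(A.card + b) * ((A.card + b).choose b : ℤ)) :=
    fun A => Finset.sum_powerset_apply_card
      (fun b => (-1:ℤ)^(A.card + b) * ((A.card + b).choose b : ℤ))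
  rw [Finset.sum_congr rfl fun A _ => inner A]
  rw [Finset.sum_powerset_apply_card (fun a => ∑ b ∈ range ((Qset τ s).card+1),
      ((Qset τ s).card.choose b) • ((-1:ℤ)^(a + b) * ((a + b).choose b : ℤ)))]
  have hre : ∑ a ∈ range ((Pset τ s).card + 1), ((Pset τ s).card.choose a) •
        (∑ b ∈ range ((Qset τ s).card+1),
          ((Qset τ s).card.choose b) • ((-1:ℤ)^(a + b) * ((a + b).choose b : ℤ)))
      = ∑ a ∈ range ((Pset τ s).card + 1), ∑ b ∈ range ((Qset τ s).card + 1),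
          (-1:ℤ)^(a+b) * ((Pset τ s).card.choose a) * ((Qset τ s).card.choose b)
            * ((a+b).choose b) := by
    refine Finset.sum_congr rfl fun a _ => ?_
    rw [nsmul_eq_mul, Finset.mul_sum]
    refine Finset.sum_congr rfl fun b _ => ?_
    rw [nsmul_eq_mul]
    push_cast
    ring
  rw [hre, lemA]
  exact if_congr (fix_iff τ s).symm rfl rfl

/-- The number of fixed points of `τ` equals
`∑_π (-1)^{|π|-1} (∑_{x ∈ SSF(π)} C(|π|-1, x-1)) occ(π, τ)`, summed over all
nonempty permutations `π` (sizes `m + 1 ∈ [1, n]`; longer patterns contribute `0`).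
In 1-indexed terms the value `x = π(j)` is `π j + 1`, so `C(|π|-1, x-1) = C(m, π j)`. -/
theorem fix_expansion (n : ℕ) (τ : Equiv.Perm (Fin n)) :
    ((univ.filter fun j : Fin n => τ j = j).card : ℤ) =
      ∑ m ∈ range n, ∑ π : Equiv.Perm (Fin (m + 1)),
        (-1 : ℤ) ^ m * (∑ j ∈ ssfPos π, (m.choose (π j : ℕ) : ℤ)) * (occ π τ : ℤ) := by
  symm
  calc ∑ m ∈ range n, ∑ π : Equiv.Perm (Fin (m + 1)),
        (-1 : ℤ) ^ m * (∑ j ∈ ssfPos π, (m.choose (π j : ℕ) : ℤ)) * (occ π τ : ℤ)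
      = ∑ m ∈ range n, ∑ f ∈ SMset n m, ∑ j ∈ Jset τ f,
          (-1:ℤ)^m * (m.choose (m - (j:ℕ)) : ℤ) :=
        Finset.sum_congr rfl fun m _ => stepA τ m
    _ = ∑ m ∈ range n, ∑ S ∈ powersetCard (m+1) (univ : Finset (Fin n)),
          ∑ s ∈ S.filter (cond' τ S),
            (-1:ℤ)^m * (m.choose ((S.filter fun t => s < t).card) : ℤ) :=
        Finset.sum_congr rfl fun m _ => stepB τ m
    _ = ∑ S ∈ (univ : Finset (Fin n)).powerset, G τ S := regroup τ
    _ = ∑ s : Fin n, ∑ S ∈ (univ : Finset (Fin n)).powerset.filter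
          (fun S => s ∈ S ∧ cond' τ S s),
          (-1:ℤ)^(S.card - 1) * ((S.card - 1).choose ((S.filter fun t => s < t).card) : ℤ) :=
        swapstep τ
    _ = ∑ s : Fin n, ∑ AB ∈ (Pset τ s).powerset ×ˢ (Qset τ s).powerset,
          (-1:ℤ)^(AB.1.card + AB.2.card) * ((AB.1.card + AB.2.card).choose AB.2.card : ℤ) :=
        Finset.sum_congr rfl fun s _ => perpoint τ s
    _ = ∑ s : Fin n, if τ s = s then (1:ℤ) else 0 :=
        Finset.sum_congr rfl fun s _ => pereval τ s
    _ = ((univ.filter fun j : Fin n => τ j = j).card : ℤ) := by rw [Finset.sum_boole]
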